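/- Let Q be a probability measure (representing the conditional distribution given X = x and A = a), let T and C be real-valued random variables with 0 ≤ T ≤ t_max and 0 ≤ C almost surely under Q, let T̃ := min(T, C), D := {C ≤ T}, and suppose 0 < Q(D) < 1. If γ is a real number with E_{Q(·|D)}[T − T̃] ≤ γ, then E_Q[T] ≤ E_{Q(·|Dᶜ)}[T] · (1 − Q(D)) + (E_{Q(·|D)}[T̃] + γ) · Q(D). That is, μ(x,a) ≤ μ⁺(x,a) := ν(0,x,a)(1−ξ(x,a)) + ν̃(1,x,a)ξ(x,a) + γ ξ(x,a), the domain-knowledge upper bound. -/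
import Mathlib

open MeasureTheory ProbabilityTheory

/-- Case 1, Eq. 6: domain-knowledge upper bound on the CAPO: With
survival time `0 ≤ T ≤ t_max`, censoring time `C ≥ 0`, `T̃ := min(T, C)`, censoring
event `D := {C ≤ T}` with `0 < Q(D) < 1`, and a real `γ` with
`E_{Q(·|D)}[T − T̃] ≤ γ`, one has
`E_Q[T] ≤ E_{Q(·|Dᶜ)}[T] · (1 − Q(D)) + (E_{Q(·|D)}[T̃] + γ) · Q(D)`,
i.e., `μ(x,a) ≤ μ⁺(x,a) = ν(0,x,a)(1−ξ) + ν̃(1,x,a)ξ + γξ`. -/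
theorem capo_domain_knowledge_upper_bound
    {Ω : Type*} [MeasurableSpace Ω] (Q : Measure Ω) [IsProbabilityMeasure Q]
    (T C : Ω → ℝ) (hTm : Measurable T) (hCm : Measurable C) (tmax : ℝ)
    (hT : ∀ᵐ ω ∂Q, 0 ≤ T ω ∧ T ω ≤ tmax) (hC : ∀ᵐ ω ∂Q, 0 ≤ C ω)
    (hD0 : 0 < Q {ω | C ω ≤ T ω}) (hD1 : Q {ω | C ω ≤ T ω} < 1)
    (γ : ℝ)
    (hγ : ∫ ω, (T ω - min (T ω) (C ω)) ∂(Q[|{ω | C ω ≤ T ω}]) ≤ γ) :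
    ∫ ω, T ω ∂Q ≤
      (∫ ω, T ω ∂(Q[|{ω | C ω ≤ T ω}ᶜ])) * (1 - (Q {ω | C ω ≤ T ω}).toReal)
        + ((∫ ω, min (T ω) (C ω) ∂(Q[|{ω | C ω ≤ T ω}])) + γ)
            * (Q {ω | C ω ≤ T ω}).toReal := by
  set s : Set Ω := {ω | C ω ≤ T ω} with hs
  have hsm : MeasurableSet s := measurableSet_le hCm hTm
  -- integrability of T
  have hTi : Integrable T Q := by
    apply Integrable.mono' (integrable_const (max 0 tmax)) hTm.aestronglyMeasurable
    filter_upwards [hT] with ω ⟨h1, h2⟩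
    rw [Real.norm_eq_abs, abs_of_nonneg h1]
    exact le_max_of_le_right h2
  have hMi : Integrable (fun ω => min (T ω) (C ω)) Q := by
    apply Integrable.mono' (integrable_const (max 0 tmax)) (hTm.min hCm).aestronglyMeasurable
    filter_upwards [hT, hC] with ω ⟨h1, h2⟩ h3
    rw [Real.norm_eq_abs, abs_of_nonneg (le_min h1 h3)]
    exact le_max_of_le_right (le_trans (min_le_left _ _) h2)
  have hQs : (Q s) ≠ 0 := hD0.ne'
  have hQs' : (Q s) ≠ ⊤ := (measure_lt_top Q s).ne
  have hQsc : (Q sᶜ) ≠ 0 := by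
    rw [prob_compl_eq_one_sub hsm]
    exact (tsub_pos_of_lt hD1).ne'
  -- cond integral formulas
  have hcond : ∀ (f : Ω → ℝ), ∫ ω, f ω ∂(Q[|s]) = (Q s).toReal⁻¹ * ∫ ω in s, f ω ∂Q := by
    intro f
    rw [ProbabilityTheory.cond, integral_smul_measure, ENNReal.toReal_inv, smul_eq_mul]
  have hcondc : ∀ (f : Ω → ℝ), ∫ ω, f ω ∂(Q[|sᶜ]) = (Q sᶜ).toReal⁻¹ * ∫ ω in sᶜ, f ω ∂Q := by
    intro f
    rw [ProbabilityTheory.cond, integral_smul_measure, ENNReal.toReal_inv, smul_eq_mul]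
  have hQscR : (Q sᶜ).toReal = 1 - (Q s).toReal := by
    rw [prob_compl_eq_one_sub hsm, ENNReal.toReal_sub_of_le hD1.le (by simp)]
    simp
  have hQsR : 0 < (Q s).toReal := ENNReal.toReal_pos hQs hQs'
  have hQscR0 : 0 < (Q sᶜ).toReal := ENNReal.toReal_pos hQsc (measure_ne_top Q sᶜ)
  -- split total integral
  have hsplit : ∫ ω, T ω ∂Q = (∫ ω in sᶜ, T ω ∂Q) + (∫ ω in s, T ω ∂Q) := by
    rw [add_comm, integral_add_compl hsm hTi]
  -- conditional integrability
  have hTics : Integrable T (Q[|s]) := by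
    rw [ProbabilityTheory.cond]
    exact (hTi.restrict).smul_measure (by simp [hQs])
  have hMics : Integrable (fun ω => min (T ω) (C ω)) (Q[|s]) := by
    rw [ProbabilityTheory.cond]
    exact (hMi.restrict).smul_measure (by simp [hQs])
  have hkey : ∫ ω, T ω ∂(Q[|s]) ≤ (∫ ω, min (T ω) (C ω) ∂(Q[|s])) + γ := by
    have := integral_sub hTics hMics
    simp only [hs] at this hγ ⊢
    rw [this] at hγ
    linarith
  calc ∫ ω, T ω ∂Q = (∫ ω in sᶜ, T ω ∂Q) + (∫ ω in s, T ω ∂Q) := hsplit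
    _ = (∫ ω, T ω ∂(Q[|sᶜ])) * (Q sᶜ).toReal + (∫ ω, T ω ∂(Q[|s])) * (Q s).toReal := by
        rw [hcond, hcondc]; field_simp
    _ ≤ (∫ ω, T ω ∂(Q[|sᶜ])) * (1 - (Q s).toReal)
        + ((∫ ω, min (T ω) (C ω) ∂(Q[|s])) + γ) * (Q s).toReal := by
        rw [hQscR]
        gcongr
    _ = _ := by rw [hs]
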